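/- For every integer n ≥ 3, the following identity holds in the rational numbers: n − 2 = (n/(n−1))^{n−3} + Σ_{k=1}^{n−2} (n/(n−1))^{n−2−k} · ( (n−3−k)/(n−2) + (2nk+n−k−2)/(n(n−1)(n−2)) ), where n−3−k is computed in ℚ (it equals −1 when k = n−2) and all exponents are natural numbers. -/

import Mathlib

lemma geom_lin_sum_aux (r A B : ℚ) (hr : r - 1 ≠ 0) (m : ℕ) :
    ∑ k ∈ Finset.Icc 1 m, r ^ (m - k) * (A * k + B) =
      (A * m + B) * (r ^ m - 1) / (r - 1)
        - A * (((m : ℚ) - 1) * r ^ (m + 1) - (m : ℚ) * r ^ m + r) / (r - 1) ^ 2 := by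
  induction m with
  | zero => simp
  | succ m ih =>
    rw [Finset.sum_Icc_succ_top (by omega : 1 ≤ m + 1)]
    have h1 : ∀ k ∈ Finset.Icc 1 m,
        r ^ (m + 1 - k) * (A * k + B) = r * (r ^ (m - k) * (A * k + B)) := by
      intro k hk
      simp only [Finset.mem_Icc] at hk
      rw [show m + 1 - k = (m - k) + 1 by omega, pow_succ]
      ring
    rw [Finset.sum_congr rfl h1, ← Finset.mul_sum, ih]
    push_cast
    field_simp
    simp only [Nat.sub_self, pow_zero]
    ring

/-- `n-2 = (n/(n-1))^(n-3) + Σ_{k=1}^{n-2} (n/(n-1))^(n-2-k)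
((n-3-k)/(n-2) + (2nk+n-k-2)/(n(n-1)(n-2)))` in `ℚ`. -/
theorem identity_prop_Kn_minus_edge (n : ℕ) (hn : 3 ≤ n) :
    (n : ℚ) - 2 =
      ((n : ℚ) / ((n : ℚ) - 1)) ^ (n - 3) +
        ∑ k ∈ Finset.Icc 1 (n - 2),
          ((n : ℚ) / ((n : ℚ) - 1)) ^ (n - 2 - k) *
            (((n : ℚ) - 3 - (k : ℚ)) / ((n : ℚ) - 2) +
              (2 * (n : ℚ) * (k : ℚ) + (n : ℚ) - (k : ℚ) - 2) /
                ((n : ℚ) * ((n : ℚ) - 1) * ((n : ℚ) - 2))) := by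
  have hn3 : (3 : ℚ) ≤ (n : ℚ) := by exact_mod_cast hn
  have h0 : (n : ℚ) ≠ 0 := by linarith
  have h1 : (n : ℚ) - 1 ≠ 0 := by intro h; nlinarith [h]
  have h2 : (n : ℚ) - 2 ≠ 0 := by intro h; nlinarith [h]
  set r : ℚ := (n : ℚ) / ((n : ℚ) - 1) with hrdef
  have hr : r - 1 ≠ 0 := by
    rw [hrdef]
    intro h
    apply h1
    field_simp at h
    linarith
  set A : ℚ := -1 / ((n : ℚ) - 2) + (2 * (n : ℚ) - 1) / ((n : ℚ) * ((n : ℚ) - 1) * ((n : ℚ) - 2))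
    with hA
  set B : ℚ := ((n : ℚ) - 3) / ((n : ℚ) - 2) + ((n : ℚ) - 2) / ((n : ℚ) * ((n : ℚ) - 1) * ((n : ℚ) - 2))
    with hB
  have hsum : ∑ k ∈ Finset.Icc 1 (n - 2),
      r ^ (n - 2 - k) *
        (((n : ℚ) - 3 - (k : ℚ)) / ((n : ℚ) - 2) +
          (2 * (n : ℚ) * (k : ℚ) + (n : ℚ) - (k : ℚ) - 2) /
            ((n : ℚ) * ((n : ℚ) - 1) * ((n : ℚ) - 2)))
      = ∑ k ∈ Finset.Icc 1 (n - 2), r ^ (n - 2 - k) * (A * k + B) := by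
    refine Finset.sum_congr rfl fun k _ => ?_
    congr 1
    rw [hA, hB]
    field_simp
    ring
  rw [hsum, geom_lin_sum_aux r A B hr (n - 2)]
  have hm : ((n - 2 : ℕ) : ℚ) = (n : ℚ) - 2 := by
    push_cast [Nat.cast_sub (by omega : 2 ≤ n)]; ring
  rw [hm]
  have e1 : n - 2 = (n - 3) + 1 := by omega
  rw [e1]
  simp only [pow_succ]
  set x : ℚ := r ^ (n - 3) with hx
  rw [hrdef, hA, hB]
  field_simp
  ring
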